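/- Let 𝔖 be an interval system on X, V, W, Z complete Hausdorff commutative topological groups, L : V × W → Z biadditive and continuous in its second variable, and μ : 𝔖 → W a measure. If f, g : X → V are Lebesgue–McShane integrable, then f + g and −f are Lebesgue–McShane integrable, ∫L(f + g, μ) = ∫L(f, μ) + ∫L(g, μ), and ∫L(−f, μ) = −∫L(f, μ). -/

import Mathlib

/-- A family `S` of subsets of `X` is an *interval system* if for all `A, B ∈ S` there exist
countable pairwise disjoint families `D₁, D₂ ⊆ S` with `⋃₀ D₁ = A \ B` and `⋃₀ D₂ = A ∩ B`. -/
def IsIntervalSystem {X : Type*} (S : Set (Set X)) : Prop :=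
  ∀ A ∈ S, ∀ B ∈ S,
    (∃ D : Set (Set X), D ⊆ S ∧ D.Countable ∧ D.PairwiseDisjoint id ∧ ⋃₀ D = A \ B) ∧
    (∃ D : Set (Set X), D ⊆ S ∧ D.Countable ∧ D.PairwiseDisjoint id ∧ ⋃₀ D = A ∩ B)

/-- A map `μ` defined on the sets of `X`, with values in a commutative topological group, is
a *measure* on the set system `S` if it is σ-additive on `S`: whenever a member `B` of `S`
is the union of a countable pairwise disjoint family `(A i)` of members of `S`, the net of
finite partial sums `∑ i ∈ Ξ, μ (A i)` (over finite `Ξ`, directed by inclusion) converges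
to `μ B`, i.e. `HasSum (fun i => μ (A i)) (μ B)`. -/
def IsAddMeasure {X W : Type*} [AddCommMonoid W] [TopologicalSpace W]
    (S : Set (Set X)) (μ : Set X → W) : Prop :=
  ∀ (ι : Type) (A : ι → Set X) (B : Set X), Countable ι → B ∈ S →
    (∀ i, A i ∈ S) → (Pairwise fun i j => Disjoint (A i) (A j)) →
    (⋃ i, A i) = B → HasSum (fun i => μ (A i)) (μ B)

/-- The value at `x` of the step function `∑ j, c j • χ_{E j}`. -/
noncomputable def stepVal {X V : Type*} [AddCommMonoid V] {n : ℕ}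
    (c : Fin n → V) (E : Fin n → Set X) (x : X) : V :=
  ∑ j, (E j).indicator (fun _ => c j) x

/-- `A ⊆ V × X` is an *envelope* of sets in `V` with respect to the set system `S` if
(i) it contains the graph of some step function over `S`, and (ii) it has a countable
generating system `D ⊆ S`:  `A = (⋃ d ∈ D, A^d ×ˢ d) ∪ ({0} ×ˢ (X \ ⋃₀ D))`, where
`A^d = {v | ∀ x ∈ d, (v, x) ∈ A}`. -/
def IsEnvelope {X V : Type*} [AddCommMonoid V] (S : Set (Set X)) (A : Set (V × X)) : Prop :=
  (∃ (n : ℕ) (c : Fin n → V) (E : Fin n → Set X),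
      (∀ j, E j ∈ S) ∧ ∀ x, (stepVal c E x, x) ∈ A) ∧
  (∃ D : Set (Set X), D ⊆ S ∧ D.Countable ∧
      A = (⋃ d ∈ D, {v : V | ∀ x ∈ d, (v, x) ∈ A} ×ˢ d) ∪ (({0} : Set V) ×ˢ (⋃₀ D)ᶜ))

/-- The pre-integral `∫^p L(A, μ)` of an envelope: the closure of the set of all values
`∑ j, L (c j) (μ (E j))` over step functions whose graph is contained in `A`. -/
def preIntegral {X V W Z : Type*} [AddCommMonoid V] [AddCommMonoid Z] [TopologicalSpace Z]
    (S : Set (Set X)) (L : V → W → Z) (μ : Set X → W) (A : Set (V × X)) : Set Z :=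
  closure { z : Z | ∃ (n : ℕ) (c : Fin n → V) (E : Fin n → Set X),
    (∀ j, E j ∈ S) ∧ (∀ x, (stepVal c E x, x) ∈ A) ∧ z = ∑ j, L (c j) (μ (E j)) }

/-- `f : X → V` has Lebesgue–McShane integral `a` if for every neighborhood `T` of `0` in `Z`
there is an envelope `A` containing the graph of `f` with `∫^p L(A, μ) ⊆ a + T`. -/
def HasLMIntegral {X V W Z : Type*} [AddCommMonoid V] [AddCommMonoid Z] [TopologicalSpace Z]
    (S : Set (Set X)) (L : V → W → Z) (μ : Set X → W) (f : X → V) (a : Z) : Prop :=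
  ∀ T ∈ nhds (0 : Z), ∃ A : Set (V × X), IsEnvelope S A ∧ (∀ x, (f x, x) ∈ A) ∧
    preIntegral S L μ A ⊆ {z | ∃ t ∈ T, z = a + t}

section Aux

open Set Filter Topology

variable {X V W Z : Type*}

/-- Union of subfamilies of a disjoint family of "parents", each subfamily living inside its
parent and itself disjoint, is disjoint. -/
lemma pairwiseDisjoint_biUnion_families {I : Set (Set X)} (hI : I.PairwiseDisjoint id)
    (F : Set X → Set (Set X)) (hFsub : ∀ p ∈ I, ∀ q ∈ F p, q ⊆ p)
    (hFdisj : ∀ p ∈ I, (F p).PairwiseDisjoint id) :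
    (⋃ p ∈ I, F p).PairwiseDisjoint id := by
  intro q₁ hq₁ q₂ hq₂ hne
  simp only [Set.mem_iUnion] at hq₁ hq₂
  obtain ⟨p₁, hp₁, hq₁'⟩ := hq₁
  obtain ⟨p₂, hp₂, hq₂'⟩ := hq₂
  by_cases hp : p₁ = p₂
  · subst hp
    exact hFdisj p₁ hp₁ hq₁' hq₂' hne
  · have hd : Disjoint p₁ p₂ := hI hp₁ hp₂ hp
    exact Disjoint.mono (hFsub p₁ hp₁ q₁ hq₁') (hFsub p₂ hp₂ q₂ hq₂') hd


lemma sUnion_biUnion_fam {X : Type*} {I : Set (Set X)} {F : Set X → Set (Set X)}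
    {g : Set X → Set X} (h : ∀ p ∈ I, ⋃₀ F p = g p) :
    ⋃₀ (⋃ p ∈ I, F p) = ⋃ p ∈ I, g p := by
  ext x
  simp only [Set.mem_sUnion, Set.mem_iUnion, exists_prop]
  constructor
  · rintro ⟨q, ⟨p, hp, hq⟩, hx⟩
    exact ⟨p, hp, (h p hp) ▸ ⟨q, hq, hx⟩⟩
  · rintro ⟨p, hp, hx⟩
    rw [← h p hp] at hx
    obtain ⟨q, hq, hx⟩ := hx
    exact ⟨q, ⟨p, hp, hq⟩, hx⟩

/-- Decomposition of `A \ ⋃ j, E j` (finitely many `E j`'s) into countably many disjoint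
members of `S`. -/
lemma sdiff_decomp {S : Set (Set X)} (hS : IsIntervalSystem S) :
    ∀ {n : ℕ} (E : Fin n → Set X), (∀ j, E j ∈ S) → ∀ {A : Set X}, A ∈ S →
    ∃ P : Set (Set X), P.Countable ∧ P ⊆ S ∧ P.PairwiseDisjoint id ∧
      ⋃₀ P = A \ ⋃ j, E j := by
  intro n
  induction n with
  | zero =>
    intro E _ A hA
    refine ⟨{A}, countable_singleton A, by simpa using hA, pairwiseDisjoint_singleton A id, ?_⟩
    simp [Set.iUnion_of_empty]
  | succ n ih =>
    intro E hE A hA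
    obtain ⟨D₁, hD₁S, hD₁c, hD₁d, hD₁U⟩ := (hS A hA (E 0) (hE 0)).1
    -- for each p ∈ D₁ decompose p \ ⋃ (E ∘ succ)
    have hstep : ∀ p ∈ D₁, ∃ P : Set (Set X), P.Countable ∧ P ⊆ S ∧ P.PairwiseDisjoint id ∧
        ⋃₀ P = p \ ⋃ j, E (Fin.succ j) := fun p hp =>
      ih (fun j => E (Fin.succ j)) (fun j => hE _) (hD₁S hp)
    choose! P hPc hPS hPd hPU using hstep
    refine ⟨⋃ p ∈ D₁, P p, hD₁c.biUnion (fun p hp => hPc p hp), ?_, ?_, ?_⟩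
    · intro q hq
      simp only [Set.mem_iUnion] at hq
      obtain ⟨p, hp, hq⟩ := hq
      exact hPS p hp hq
    · refine pairwiseDisjoint_biUnion_families hD₁d P (fun p hp q hq => ?_) hPd
      have : q ⊆ ⋃₀ P p := subset_sUnion_of_mem hq
      rw [hPU p hp] at this
      exact this.trans diff_subset
    · rw [sUnion_biUnion_fam hPU]
      have h2 : ⋃ p ∈ D₁, (p \ ⋃ j, E (Fin.succ j)) = (⋃₀ D₁) \ ⋃ j, E (Fin.succ j) := by
        ext x
        simp only [Set.mem_iUnion, Set.mem_diff, Set.mem_sUnion, exists_prop]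
        tauto
      rw [h2, hD₁U]
      ext x
      simp only [Set.mem_diff, Set.mem_iUnion, Fin.exists_fin_succ]
      tauto

/-- Common refinement of finitely many members of `S` by a countable disjoint family
from `S`, with the dichotomy property. -/
lemma refine_finite {S : Set (Set X)} (hS : IsIntervalSystem S) :
    ∀ {n : ℕ} (E : Fin n → Set X), (∀ j, E j ∈ S) →
    ∃ R : Set (Set X), R.Countable ∧ R ⊆ S ∧ R.PairwiseDisjoint id ∧
      ⋃₀ R = ⋃ j, E j ∧ ∀ r ∈ R, ∀ j, r ⊆ E j ∨ Disjoint r (E j) := by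
  intro n
  induction n with
  | zero =>
    intro E _
    exact ⟨∅, countable_empty, empty_subset _, pairwiseDisjoint_empty, by simp, by simp⟩
  | succ n ih =>
    intro E hE
    obtain ⟨R, hRc, hRS, hRd, hRU, hRdi⟩ := ih (fun j => E (Fin.succ j)) (fun j => hE _)
    set A := E 0 with hAdef
    have hA : A ∈ S := hE 0
    -- decompose r ∩ A and r \ A for r ∈ R
    have hstep : ∀ r ∈ R, ∃ P : Set (Set X), P.Countable ∧ P ⊆ S ∧ P.PairwiseDisjoint id ∧
        ⋃₀ P = r ∧ (∀ q ∈ P, q ⊆ A ∨ Disjoint q A) := by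
      intro r hr
      obtain ⟨Dm, hDmS, hDmc, hDmd, hDmU⟩ := (hS r (hRS hr) A hA).1
      obtain ⟨Di, hDiS, hDic, hDid, hDiU⟩ := (hS r (hRS hr) A hA).2
      refine ⟨Dm ∪ Di, hDmc.union hDic, union_subset hDmS hDiS, ?_, ?_, ?_⟩
      · intro q₁ hq₁ q₂ hq₂ hne
        have sub1 : ∀ q ∈ Dm, q ⊆ r \ A := fun q hq => hDmU ▸ subset_sUnion_of_mem hq
        have sub2 : ∀ q ∈ Di, q ⊆ r ∩ A := fun q hq => hDiU ▸ subset_sUnion_of_mem hq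
        rcases hq₁ with h₁ | h₁ <;> rcases hq₂ with h₂ | h₂
        · exact hDmd h₁ h₂ hne
        · exact Set.disjoint_left.mpr fun x hx₁ hx₂ => (sub1 _ h₁ hx₁).2 (sub2 _ h₂ hx₂).2
        · exact Set.disjoint_left.mpr fun x hx₁ hx₂ => (sub1 _ h₂ hx₂).2 (sub2 _ h₁ hx₁).2
        · exact hDid h₁ h₂ hne
      · rw [Set.sUnion_union, hDmU, hDiU, Set.diff_union_inter]
      · intro q hq
        rcases hq with hq | hq
        · exact Or.inr (Set.disjoint_left.mpr fun x hx =>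
            ((hDmU ▸ subset_sUnion_of_mem hq) hx).2)
        · exact Or.inl ((hDiU ▸ subset_sUnion_of_mem hq).trans inter_subset_right)
    choose! P hPc hPS hPd hPU hPdi using hstep
    -- pieces of A \ ⋃₀ R
    obtain ⟨PA, hPAc, hPAS, hPAd, hPAU⟩ := sdiff_decomp hS (fun j => E (Fin.succ j))
      (fun j => hE _) hA
    refine ⟨(⋃ r ∈ R, P r) ∪ PA, ((hRc.biUnion (fun r hr => hPc r hr)).union hPAc),
      ?_, ?_, ?_, ?_⟩
    · intro q hq
      rcases hq with hq | hq
      · simp only [Set.mem_iUnion] at hq; obtain ⟨r, hr, hq⟩ := hq; exact hPS r hr hq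
      · exact hPAS hq
    · intro q₁ hq₁ q₂ hq₂ hne
      have subP : ∀ q, q ∈ (⋃ r ∈ R, P r) → q ⊆ ⋃₀ R := by
        intro q hq
        simp only [Set.mem_iUnion] at hq
        obtain ⟨r, hr, hq⟩ := hq
        exact ((hPU r hr ▸ subset_sUnion_of_mem hq)).trans (subset_sUnion_of_mem hr)
      have subPA : ∀ q, q ∈ PA → q ⊆ (⋃₀ R)ᶜ := by
        intro q hq x hx
        have := (hPAU ▸ subset_sUnion_of_mem hq) hx
        rw [hRU]
        exact this.2
      rcases hq₁ with h₁ | h₁ <;> rcases hq₂ with h₂ | h₂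
      · exact pairwiseDisjoint_biUnion_families hRd P
          (fun r hr q hq => hPU r hr ▸ subset_sUnion_of_mem hq) hPd h₁ h₂ hne
      · exact Set.disjoint_left.mpr fun x hx₁ hx₂ => (subPA _ h₂ hx₂) (subP _ h₁ hx₁)
      · exact Set.disjoint_left.mpr fun x hx₁ hx₂ => (subPA _ h₁ hx₁) (subP _ h₂ hx₂)
      · exact hPAd h₁ h₂ hne
    · rw [Set.sUnion_union]
      have h1 : ⋃₀ (⋃ r ∈ R, P r) = ⋃ r ∈ R, r := sUnion_biUnion_fam hPU
      have h1' : ⋃ r ∈ R, r = ⋃₀ R := (Set.sUnion_eq_biUnion).symm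
      rw [h1, h1', hPAU, hRU]
      ext x
      simp only [Set.mem_union, Set.mem_diff, Set.mem_iUnion, Fin.exists_fin_succ]
      tauto
    · intro q hq j
      refine Fin.cases ?_ ?_ j
      · -- j = 0
        rcases hq with hq | hq
        · simp only [Set.mem_iUnion] at hq
          obtain ⟨r, hr, hq⟩ := hq
          exact hPdi r hr q hq
        · exact Or.inl ((hPAU ▸ subset_sUnion_of_mem hq).trans diff_subset)
      · intro i
        rcases hq with hq | hq
        · simp only [Set.mem_iUnion] at hq
          obtain ⟨r, hr, hq⟩ := hq
          have hsub : q ⊆ r := hPU r hr ▸ subset_sUnion_of_mem hq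
          rcases hRdi r hr i with h | h
          · exact Or.inl (hsub.trans h)
          · exact Or.inr (Disjoint.mono_left hsub h)
        · refine Or.inr (Set.disjoint_left.mpr fun x hx hx' => ?_)
          have := (hPAU ▸ subset_sUnion_of_mem hq) hx
          exact this.2 (Set.mem_iUnion.mpr ⟨i, hx'⟩)

end Aux

section Aux2

open Set Filter Topology

variable {X V W Z : Type*}

/-- Cover a member `r` of `S` that is contained in the union of a countable subfamily `𝔈` of `S`
by countably many disjoint members of `S`, each inside some member of `𝔈`. -/
lemma cover_by_countable {S : Set (Set X)} (hS : IsIntervalSystem S) {r : Set X} (hr : r ∈ S)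
    {𝔈 : Set (Set X)} (h𝔈c : 𝔈.Countable) (h𝔈S : 𝔈 ⊆ S) (hcov : r ⊆ ⋃₀ 𝔈) :
    ∃ P : Set (Set X), P.Countable ∧ P ⊆ S ∧ P.PairwiseDisjoint id ∧ ⋃₀ P = r ∧
      ∀ q ∈ P, ∃ e ∈ 𝔈, q ⊆ e := by
  rcases Set.eq_empty_or_nonempty 𝔈 with h𝔈e | h𝔈ne
  · subst h𝔈e
    have : r = ∅ := by simpa using hcov
    exact ⟨∅, countable_empty, empty_subset _, pairwiseDisjoint_empty, by simp [this], by simp⟩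
  obtain ⟨e, he⟩ := h𝔈c.exists_eq_range h𝔈ne
  have heS : ∀ k, e k ∈ S := fun k => h𝔈S (he ▸ Set.mem_range_self k)
  -- stage k : pieces of (r ∩ e k) \ ⋃ i < k, e i
  have hstage : ∀ k : ℕ, ∃ P : Set (Set X), P.Countable ∧ P ⊆ S ∧ P.PairwiseDisjoint id ∧
      ⋃₀ P = (r ∩ e k) \ ⋃ i : Fin k, e i ∧ ∀ q ∈ P, q ⊆ e k := by
    intro k
    obtain ⟨Di, hDiS, hDic, hDid, hDiU⟩ := (hS r hr (e k) (heS k)).2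
    have hsub : ∀ p ∈ Di, p ⊆ r ∩ e k := fun p hp => hDiU ▸ subset_sUnion_of_mem hp
    have hstep : ∀ p ∈ Di, ∃ P : Set (Set X), P.Countable ∧ P ⊆ S ∧ P.PairwiseDisjoint id ∧
        ⋃₀ P = p \ ⋃ i : Fin k, e i :=
      fun p hp => sdiff_decomp hS (fun i : Fin k => e i) (fun i => heS i) (hDiS hp)
    choose! Q hQc hQS hQd hQU using hstep
    refine ⟨⋃ p ∈ Di, Q p, hDic.biUnion (fun p hp => hQc p hp), ?_, ?_, ?_, ?_⟩
    · intro q hq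
      simp only [Set.mem_iUnion] at hq
      obtain ⟨p, hp, hq⟩ := hq
      exact hQS p hp hq
    · exact pairwiseDisjoint_biUnion_families hDid Q
        (fun p hp q hq => (hQU p hp ▸ subset_sUnion_of_mem hq).trans diff_subset) hQd
    · rw [sUnion_biUnion_fam hQU]
      ext x
      simp only [Set.mem_iUnion, Set.mem_diff, exists_prop]
      constructor
      · rintro ⟨p, hp, hx, hx'⟩
        exact ⟨hsub p hp hx, hx'⟩
      · rintro ⟨hx, hx'⟩
        have hx2 : x ∈ ⋃₀ Di := hDiU ▸ hx
        obtain ⟨p, hp, hx3⟩ := hx2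
        exact ⟨p, hp, hx3, hx'⟩
    · intro q hq
      simp only [Set.mem_iUnion] at hq
      obtain ⟨p, hp, hq⟩ := hq
      exact ((hQU p hp ▸ subset_sUnion_of_mem hq).trans diff_subset).trans
        ((hsub p hp).trans inter_subset_right)
  choose Q hQc hQS hQd hQU hQe using hstage
  refine ⟨⋃ k : ℕ, Q k, countable_iUnion hQc, ?_, ?_, ?_, ?_⟩
  · intro q hq
    simp only [Set.mem_iUnion] at hq
    obtain ⟨k, hq⟩ := hq
    exact hQS k hq
  · intro q₁ hq₁ q₂ hq₂ hne
    simp only [Set.mem_iUnion] at hq₁ hq₂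
    obtain ⟨k₁, hq₁⟩ := hq₁
    obtain ⟨k₂, hq₂⟩ := hq₂
    rcases lt_trichotomy k₁ k₂ with h | h | h
    · refine Set.disjoint_left.mpr fun x hx₁ hx₂ => ?_
      have h1 : x ∈ e k₁ := hQe k₁ q₁ hq₁ hx₁
      have h2 := (hQU k₂ ▸ subset_sUnion_of_mem hq₂) hx₂
      exact h2.2 (Set.mem_iUnion.mpr ⟨⟨k₁, h⟩, h1⟩)
    · subst h
      exact hQd k₁ hq₁ hq₂ hne
    · refine Set.disjoint_left.mpr fun x hx₁ hx₂ => ?_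
      have h1 : x ∈ e k₂ := hQe k₂ q₂ hq₂ hx₂
      have h2 := (hQU k₁ ▸ subset_sUnion_of_mem hq₁) hx₁
      exact h2.2 (Set.mem_iUnion.mpr ⟨⟨k₂, h⟩, h1⟩)
  · ext x
    simp only [Set.mem_sUnion, Set.mem_iUnion]
    constructor
    · rintro ⟨q, ⟨k, hq⟩, hx⟩
      exact ((hQU k ▸ subset_sUnion_of_mem hq) hx).1.1
    · intro hx
      have hxcov : x ∈ ⋃₀ 𝔈 := hcov hx
      rw [he] at hxcov
      obtain ⟨y, ⟨k, rfl⟩, hy⟩ := hxcov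
      have hex : ∃ k, x ∈ e k := ⟨k, hy⟩
      classical
      let k₀ := Nat.find hex
      have hk₀ : x ∈ e k₀ := Nat.find_spec hex
      have hmin : ∀ i : Fin k₀, x ∉ e i := fun i => Nat.find_min hex i.2
      have : x ∈ ⋃₀ Q k₀ := by
        rw [hQU k₀]
        exact ⟨⟨hx, hk₀⟩, by simpa using hmin⟩
      obtain ⟨q, hq, hxq⟩ := this
      exact ⟨q, ⟨k₀, hq⟩, hxq⟩
  · intro q hq
    simp only [Set.mem_iUnion] at hq
    obtain ⟨k, hq⟩ := hq
    exact ⟨e k, he ▸ Set.mem_range_self k, hQe k q hq⟩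

end Aux2

section Aux3

open Set Filter Topology

variable {X V W Z : Type*}

lemma stepVal_append [AddCommMonoid V] {m n : ℕ} (c : Fin m → V) (d : Fin n → V)
    (E : Fin m → Set X) (F : Fin n → Set X) (x : X) :
    stepVal (Fin.append c d) (Fin.append E F) x = stepVal c E x + stepVal d F x := by
  unfold stepVal
  rw [Fin.sum_univ_add]
  congr 1
  · exact Finset.sum_congr rfl fun j _ => by rw [Fin.append_left, Fin.append_left]
  · exact Finset.sum_congr rfl fun j _ => by rw [Fin.append_right, Fin.append_right]

lemma stepVal_neg [AddCommGroup V] {n : ℕ} (c : Fin n → V) (E : Fin n → Set X) (x : X) :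
    stepVal (fun j => -(c j)) E x = -(stepVal c E x) := by
  classical
  unfold stepVal
  rw [← Finset.sum_neg_distrib]
  refine Finset.sum_congr rfl fun j _ => ?_
  by_cases h : x ∈ E j <;> simp [h]

open scoped Classical in
lemma stepVal_const_on [AddCommMonoid V] {n : ℕ} (c : Fin n → V) (E : Fin n → Set X)
    {r : Set X} (hdi : ∀ j, r ⊆ E j ∨ Disjoint r (E j)) {y : X} (hy : y ∈ r) :
    stepVal c E y = ∑ j, if r ⊆ E j then c j else 0 := by
  unfold stepVal
  refine Finset.sum_congr rfl fun j _ => ?_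
  rcases hdi j with h | h
  · rw [if_pos h, Set.indicator_of_mem (h hy)]
  · have hy' : y ∉ E j := Set.disjoint_left.mp h hy
    rw [Set.indicator_of_notMem hy', if_neg]
    intro hsub
    exact hy' (hsub hy)

/-- the section of `A ⊆ V × X` over a set `e ⊆ X`. -/
def sect (A : Set (V × X)) (e : Set X) : Set V := {v | ∀ y ∈ e, (v, y) ∈ A}

lemma sect_mono {A : Set (V × X)} {e e' : Set X} (h : e ⊆ e') : sect A e' ⊆ sect A e :=
  fun _ hv y hy => hv y (h hy)

/-- sum sections. -/
def Msect [AddCommMonoid V] (A₁ A₂ : Set (V × X)) (e : Set X) : Set V :=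
  {v | ∃ p ∈ sect A₁ e, ∃ q ∈ sect A₂ e, v = p + q}

/-- The set whose closure is the pre-integral. -/
def preSet [AddCommMonoid V] [AddCommMonoid Z] [TopologicalSpace Z]
    (S : Set (Set X)) (L : V → W → Z) (μ : Set X → W) (A : Set (V × X)) : Set Z :=
  { z : Z | ∃ (n : ℕ) (c : Fin n → V) (E : Fin n → Set X),
    (∀ j, E j ∈ S) ∧ (∀ x, (stepVal c E x, x) ∈ A) ∧ z = ∑ j, L (c j) (μ (E j)) }

-- σ-additivity over a countable disjoint set family.
lemma measure_hasSum [AddCommMonoid W] [TopologicalSpace W]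
    {S : Set (Set X)} {μ : Set X → W} (hμ : IsAddMeasure S μ)
    {D : Set (Set X)} (hDc : D.Countable) (hDS : D ⊆ S) (hDd : D.PairwiseDisjoint id)
    {B : Set X} (hB : B ∈ S) (hU : ⋃₀ D = B) :
    HasSum (fun d : D => μ ↑d) (μ B) := by
  haveI : Countable ↥D := hDc.to_subtype
  obtain ⟨φ, hφ⟩ := Countable.exists_injective_nat' (α := ↥D)
  let eqv : ↥D ≃ ↥(Set.range φ) := Equiv.ofInjective φ hφ
  have key : HasSum (fun i : ↥(Set.range φ) => μ ↑(eqv.symm i)) (μ B) := by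
    refine hμ ↥(Set.range φ) (fun i => ↑(eqv.symm i)) B inferInstance hB
      (fun i => hDS (eqv.symm i).2) ?_ ?_
    · intro i j hij
      have hne : (eqv.symm i : Set X) ≠ ↑(eqv.symm j) := by
        intro h
        exact hij (eqv.symm.injective.eq_iff.mp (Subtype.ext h) ▸ rfl)
      exact hDd (eqv.symm i).2 (eqv.symm j).2 hne
    · rw [← hU]
      ext x
      simp only [Set.mem_iUnion, Set.mem_sUnion]
      constructor
      · rintro ⟨i, hx⟩
        exact ⟨↑(eqv.symm i), (eqv.symm i).2, hx⟩
      · rintro ⟨d, hd, hx⟩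
        exact ⟨eqv ⟨d, hd⟩, by rw [Equiv.symm_apply_apply]; exact hx⟩
  have := (Equiv.hasSum_iff eqv.symm (f := fun d : D => μ ↑d) (a := μ B)).mp ?_
  · exact this
  · exact key

-- extend a HasSum over a sub-subfamily by zero.
lemma hasSum_extend [AddCommMonoid Z] [TopologicalSpace Z]
    {𝒬 : Set (Set X)} (Pr : Set X → Prop) [∀ q, Decidable (Pr q)] (F : Set X → Z) {z : Z}
    (h : HasSum (fun q : ↥{q ∈ 𝒬 | Pr q} => F ↑q) z) :
    HasSum (fun q : ↥𝒬 => if Pr ↑q then F ↑q else 0) z := by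
  have hinj : Function.Injective (fun q : ↥{q ∈ 𝒬 | Pr q} => (⟨↑q, q.2.1⟩ : ↥𝒬)) := by
    intro q₁ q₂ h'
    simpa [Subtype.ext_iff] using h' 
  have hzero : ∀ q : ↥𝒬, q ∉ Set.range (fun q : ↥{q ∈ 𝒬 | Pr q} => (⟨↑q, q.2.1⟩ : ↥𝒬)) →
      (if Pr ↑q then F ↑q else 0) = 0 := by
    intro q hq
    rw [if_neg]
    intro hPr
    exact hq ⟨⟨↑q, q.2, hPr⟩, rfl⟩
  refine (Function.Injective.hasSum_iff hinj hzero).mp ?_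
  have hcomp : ((fun q : ↥𝒬 => if Pr ↑q then F ↑q else 0) ∘
      (fun q : ↥{q ∈ 𝒬 | Pr q} => (⟨↑q, q.2.1⟩ : ↥𝒬))) = fun q : ↥{q ∈ 𝒬 | Pr q} => F ↑q := by
    funext q
    exact if_pos q.2.2
  rw [hcomp]
  exact h

lemma approx_of_mem_closure [AddCommGroup Z] [TopologicalSpace Z] [IsTopologicalAddGroup Z]
    {s : Set Z} {z : Z} (hz : z ∈ closure s) {N : Set Z} (hN : N ∈ nhds (0 : Z)) :
    ∃ w ∈ s, z - w ∈ N := by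
  have hU : (fun w => z - w) ⁻¹' N ∈ nhds z := by
    have hc : ContinuousAt (fun w => z - w) z := (continuous_const.sub continuous_id).continuousAt
    apply hc
    simpa using hN
  obtain ⟨w, hw1, hw2⟩ := mem_closure_iff_nhds.mp hz _ hU
  exact ⟨w, hw2, hw1⟩

end Aux3

section Aux4

open Set Filter Topology

variable {X V W Z : Type*}

/-- Refine a member `e` of `S` into countably many members over which a finite family has
the dichotomy property. -/
lemma const_refine {S : Set (Set X)} (hS : IsIntervalSystem S) {e : Set X} (he : e ∈ S)
    {m : ℕ} {F : Fin m → Set X} (hF : ∀ k, F k ∈ S) :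
    ∃ P : Set (Set X), P.Countable ∧ P ⊆ S ∧ ⋃₀ P = e ∧
      ∀ p ∈ P, p ⊆ e ∧ ∀ j, p ⊆ F j ∨ Disjoint p (F j) := by
  obtain ⟨R, hRc, hRS, hRd, hRU, hRdi⟩ := refine_finite hS (Fin.cons e F)
    (fun j => Fin.cases he hF j)
  refine ⟨{r ∈ R | r ⊆ e}, hRc.mono (sep_subset _ _), fun r hr => hRS hr.1, ?_, ?_⟩
  · apply Set.Subset.antisymm
    · intro x hx
      obtain ⟨r, hr, hx⟩ := hx
      exact hr.2 hx
    · intro x hx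
      have : x ∈ ⋃₀ R := by
        rw [hRU]
        exact Set.mem_iUnion.mpr ⟨0, by simpa using hx⟩
      obtain ⟨r, hr, hxr⟩ := this
      have hre : r ⊆ e := by
        rcases hRdi r hr 0 with h | h
        · simpa using h
        · exact absurd (Set.disjoint_left.mp h hxr) (by simpa using not_not.mpr hx)
      exact ⟨r, ⟨hr, hre⟩, hxr⟩
  · intro p hp
    refine ⟨hp.2, fun j => ?_⟩
    have := hRdi p hp.1 j.succ
    simpa using this

lemma sect_cent_zero [AddCommGroup V] {A : Set (V × X)} {σ : X → V}
    (hσ : ∀ x, (σ x, x) ∈ A) (x : X) :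
    ((0 : V), x) ∈ {p : V × X | (p.1 + σ p.2, p.2) ∈ A} := by
  simp only [Set.mem_setOf_eq, zero_add]
  exact hσ x

/-- Centering an envelope at its witness step function. -/
lemma center [AddCommGroup V] {S : Set (Set X)} (hS : IsIntervalSystem S)
    {A : Set (V × X)} (hAenv : IsEnvelope S A) :
    ∃ (m : ℕ) (cw : Fin m → V) (F : Fin m → Set X) (D' : Set (Set X)),
      (∀ k, F k ∈ S) ∧ (∀ x, (stepVal cw F x, x) ∈ A) ∧ D'.Countable ∧ D' ⊆ S ∧
      (∀ x, x ∉ ⋃₀ D' → stepVal cw F x = 0) ∧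
      ({p : V × X | (p.1 + stepVal cw F p.2, p.2) ∈ A} =
        (⋃ e ∈ D', sect {p : V × X | (p.1 + stepVal cw F p.2, p.2) ∈ A} e ×ˢ e) ∪
          (({0} : Set V) ×ˢ (⋃₀ D')ᶜ)) := by
  obtain ⟨⟨m, cw, F, hFS, hFgr⟩, ⟨D, hDS, hDc, hDeq⟩⟩ := hAenv
  have memA_cases : ∀ {v : V} {x : X}, (v, x) ∈ A →
      (∃ d ∈ D, x ∈ d ∧ ∀ y ∈ d, (v, y) ∈ A) ∨ (v = 0 ∧ x ∉ ⋃₀ D) := by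
    intro v x hvx
    rw [hDeq] at hvx
    rcases hvx with h | h
    · simp only [Set.mem_iUnion, Set.mem_prod, Set.mem_setOf_eq] at h
      obtain ⟨d, hd, hv, hx⟩ := h
      exact Or.inl ⟨d, hd, hx, hv⟩
    · simp only [Set.mem_prod, Set.mem_singleton_iff, Set.mem_compl_iff] at h
      exact Or.inr h
  have hσ0 : ∀ x, x ∉ ⋃₀ D → stepVal cw F x = 0 := by
    intro x hx
    rcases memA_cases (hFgr x) with ⟨d, hd, hxd, _⟩ | ⟨h0, _⟩
    · exact absurd ⟨d, hd, hxd⟩ hx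
    · exact h0
  have hpieces : ∀ d : ↥D, ∃ P : Set (Set X), P.Countable ∧ P ⊆ S ∧ ⋃₀ P = ↑d ∧
      ∀ p ∈ P, p ⊆ ↑d ∧ ∀ j, p ⊆ F j ∨ Disjoint p (F j) :=
    fun d => const_refine hS (hDS d.2) hFS
  choose Pd hPdc hPdS hPdU hPdp using hpieces
  haveI : Countable ↥D := hDc.to_subtype
  set D' : Set (Set X) := ⋃ d : ↥D, Pd d with hD'def
  have hD'c : D'.Countable := countable_iUnion hPdc
  have hD'S : D' ⊆ S := by
    intro p hp
    obtain ⟨d, hp⟩ := Set.mem_iUnion.mp hp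
    exact hPdS d hp
  have hD'U : ⋃₀ D' = ⋃₀ D := by
    apply Set.Subset.antisymm
    · rintro x ⟨p, hp, hx⟩
      obtain ⟨d, hp⟩ := Set.mem_iUnion.mp hp
      exact ⟨↑d, d.2, (hPdp d p hp).1 hx⟩
    · rintro x ⟨d, hd, hx⟩
      have : x ∈ ⋃₀ Pd ⟨d, hd⟩ := (hPdU ⟨d, hd⟩).symm ▸ hx
      obtain ⟨p, hp, hx⟩ := this
      exact ⟨p, Set.mem_iUnion.mpr ⟨⟨d, hd⟩, hp⟩, hx⟩
  have hσconst : ∀ (d : ↥D) (p : Set X), p ∈ Pd d → ∀ y ∈ p, ∀ z ∈ p,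
      stepVal cw F y = stepVal cw F z := by
    intro d p hp y hy z hz
    classical
    rw [stepVal_const_on cw F (hPdp d p hp).2 hy, stepVal_const_on cw F (hPdp d p hp).2 hz]
  refine ⟨m, cw, F, D', hFS, hFgr, hD'c, hD'S, fun x hx => hσ0 x (hD'U ▸ hx), ?_⟩
  apply Set.Subset.antisymm
  · rintro ⟨v, x⟩ hvx
    simp only [Set.mem_setOf_eq] at hvx
    rcases memA_cases hvx with ⟨d, hd, hxd, hval⟩ | ⟨hv0, hxD⟩
    · have : x ∈ ⋃₀ Pd ⟨d, hd⟩ := (hPdU ⟨d, hd⟩).symm ▸ hxd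
      obtain ⟨p, hp, hxp⟩ := this
      refine Set.mem_union_left _ ?_
      refine Set.mem_iUnion.mpr ⟨p, Set.mem_iUnion.mpr ⟨Set.mem_iUnion.mpr ⟨⟨d, hd⟩, hp⟩, ?_⟩⟩
      refine ⟨?_, hxp⟩
      intro y hy
      simp only [Set.mem_setOf_eq]
      have hσeq : stepVal cw F y = stepVal cw F x := hσconst ⟨d, hd⟩ p hp y hy x hxp
      rw [hσeq]
      exact hval y ((hPdp ⟨d, hd⟩ p hp).1 hy)
    · have hσx : stepVal cw F x = 0 := hσ0 x hxD
      rw [hσx, add_zero] at hv0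
      refine Set.mem_union_right _ ?_
      exact ⟨hv0 ▸ rfl, by rw [hD'U]; exact hxD⟩
  · rintro ⟨v, x⟩ hvx
    rcases hvx with h | h
    · simp only [Set.mem_iUnion, Set.mem_prod] at h
      obtain ⟨e, he, hv, hx⟩ := h
      exact hv x hx
    · simp only [Set.mem_prod, Set.mem_singleton_iff, Set.mem_compl_iff] at h
      rw [h.1]
      exact sect_cent_zero hFgr x

end Aux4

section Core

open Set Filter Topology

variable {X V W Z : Type*}

lemma L_sum_left [AddCommGroup V] [AddCommGroup Z] {L : V → W → Z}
    (hL1 : ∀ v₁ v₂ w, L (v₁ + v₂) w = L v₁ w + L v₂ w) (w : W)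
    {ι : Type*} (s : Finset ι) (f : ι → V) :
    L (∑ i ∈ s, f i) w = ∑ i ∈ s, L (f i) w :=
  map_sum (AddMonoidHom.mk' (fun v => L v w) (fun a b => hL1 a b w)) f s

lemma L_zero_left [AddCommGroup V] [AddCommGroup Z] {L : V → W → Z}
    (hL1 : ∀ v₁ v₂ w, L (v₁ + v₂) w = L v₁ w + L v₂ w) (w : W) :
    L 0 w = 0 :=
  map_zero (AddMonoidHom.mk' (fun v => L v w) (fun a b => hL1 a b w))

lemma L_neg_left [AddCommGroup V] [AddCommGroup Z] {L : V → W → Z}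
    (hL1 : ∀ v₁ v₂ w, L (v₁ + v₂) w = L v₁ w + L v₂ w) (v : V) (w : W) :
    L (-v) w = -(L v w) :=
  map_neg (AddMonoidHom.mk' (fun v => L v w) (fun a b => hL1 a b w)) v

/-- A finite disjoint adapted family gives an element of the pre-set. -/
lemma finset_step_mem [AddCommGroup V] [AddCommGroup Z] [TopologicalSpace Z]
    {S : Set (Set X)} {L : V → W → Z} {μ : Set X → W}
    {A : Set (V × X)} (h0 : ∀ x, ((0 : V), x) ∈ A)
    {𝒬 : Set (Set X)} (h𝒬S : 𝒬 ⊆ S) (h𝒬d : 𝒬.PairwiseDisjoint id)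
    (G : Finset ↥𝒬) (p : ↥𝒬 → V) (hp : ∀ q : ↥𝒬, p q ∈ sect A ↑q) :
    (∑ q ∈ G, L (p q) (μ ↑q)) ∈ preSet S L μ A := by
  classical
  refine ⟨G.card, fun k => p ↑(G.equivFin.symm k), fun k => ↑↑(G.equivFin.symm k),
    fun k => h𝒬S (↑(G.equivFin.symm k) : ↥𝒬).2, ?_, ?_⟩
  · intro x
    have hval : stepVal (fun k => p ↑(G.equivFin.symm k)) (fun k => ↑↑(G.equivFin.symm k)) x
        = ∑ q ∈ G, (↑q : Set X).indicator (fun _ => p q) x := by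
      unfold stepVal
      rw [← Finset.sum_coe_sort G (fun q : ↥𝒬 => (↑q : Set X).indicator (fun _ => p q) x)]
      exact Equiv.sum_comp G.equivFin.symm
        (fun qg : ↥G => (↑↑qg : Set X).indicator (fun _ => p ↑qg) x)
    rw [hval]
    by_cases hx : ∃ q ∈ G, x ∈ (↑q : Set X)
    · obtain ⟨q₀, hq₀G, hx₀⟩ := hx
      have hsum : ∑ q ∈ G, (↑q : Set X).indicator (fun _ => p q) x = p q₀ := by
        rw [Finset.sum_eq_single_of_mem q₀ hq₀G]
        · exact Set.indicator_of_mem hx₀ _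
        · intro q hq hne
          refine Set.indicator_of_notMem ?_ _
          intro hxq
          have hne' : (↑q : Set X) ≠ ↑q₀ := fun h => hne (Subtype.ext h)
          exact Set.disjoint_left.mp (h𝒬d q.2 q₀.2 hne') hxq hx₀
      rw [hsum]
      exact hp q₀ x hx₀
    · push_neg at hx
      have hsum : ∑ q ∈ G, (↑q : Set X).indicator (fun _ => p q) x = 0 :=
        Finset.sum_eq_zero fun q hq => Set.indicator_of_notMem (hx q hq) _
      rw [hsum]
      exact h0 x
  · rw [← Finset.sum_coe_sort G (fun q : ↥𝒬 => L (p q) (μ ↑q))]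
    exact (Equiv.sum_comp G.equivFin.symm
      (fun qg : ↥G => L (p ↑qg) (μ ↑↑qg))).symm

open scoped Classical in
/-- Core lemma: the value of any step function subordinate to the "sum envelope" generated
form lies in the closure of the sum of the two pre-sets. -/
lemma core [AddCommGroup V] [AddCommMonoid W] [TopologicalSpace W]
    [AddCommGroup Z] [TopologicalSpace Z] [IsTopologicalAddGroup Z]
    {S : Set (Set X)} (hS : IsIntervalSystem S)
    {L : V → W → Z}
    (hL1 : ∀ v₁ v₂ w, L (v₁ + v₂) w = L v₁ w + L v₂ w)
    (hL2 : ∀ v w₁ w₂, L v (w₁ + w₂) = L v w₁ + L v w₂)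
    (hLc : ∀ v, Continuous fun w => L v w)
    {μ : Set X → W} (hμ : IsAddMeasure S μ)
    (A₁ A₂ : Set (V × X)) (h01 : ∀ x, ((0 : V), x) ∈ A₁) (h02 : ∀ x, ((0 : V), x) ∈ A₂)
    (DC : Set (Set X)) (hDCc : DC.Countable) (hDCS : DC ⊆ S)
    {n : ℕ} {c : Fin n → V} {E : Fin n → Set X} (hES : ∀ j, E j ∈ S)
    (hgr : ∀ x, (stepVal c E x, x) ∈
      (⋃ e ∈ DC, (Msect A₁ A₂ e) ×ˢ e) ∪ (({0} : Set V) ×ˢ (⋃₀ DC)ᶜ)) :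
    (∑ j, L (c j) (μ (E j))) ∈
      closure {z : Z | ∃ z₁ ∈ preSet S L μ A₁, ∃ z₂ ∈ preSet S L μ A₂, z = z₁ + z₂} := by
  obtain ⟨R, hRc, hRS, hRd, hRU, hRdi⟩ := refine_finite hS E hES
  have hatom : ∀ r : ↥R, ∃ P : Set (Set X), P.Countable ∧ P ⊆ S ∧ P.PairwiseDisjoint id ∧
      ⋃₀ P = ↑r ∧ ∀ q ∈ P, q ⊆ ↑r ∧ ∃ p β, p ∈ sect A₁ q ∧ β ∈ sect A₂ q ∧
        ∀ y ∈ q, stepVal c E y = p + β := by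
    rintro ⟨r, hr⟩
    rcases Set.eq_empty_or_nonempty r with hre | ⟨x₀, hx₀⟩
    · exact ⟨∅, countable_empty, empty_subset _, pairwiseDisjoint_empty,
        by simp [hre], by simp⟩
    · have hconst : ∀ y ∈ r, stepVal c E y = stepVal c E x₀ := fun y hy => by
        rw [stepVal_const_on c E (hRdi r hr) hy, stepVal_const_on c E (hRdi r hr) hx₀]
      by_cases hv0 : stepVal c E x₀ = 0
      · refine ⟨{r}, countable_singleton r, by simpa using hRS hr,
          pairwiseDisjoint_singleton r id, by simp, ?_⟩
        intro q hq
        rw [Set.mem_singleton_iff] at hq; subst hq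
        refine ⟨Set.Subset.rfl, 0, 0, fun y _ => h01 y, fun y _ => h02 y, fun y hy => ?_⟩
        rw [hconst y hy, hv0, add_zero]
      · have hcov : r ⊆ ⋃₀ {e ∈ DC | stepVal c E x₀ ∈ Msect A₁ A₂ e} := by
          intro y hy
          have hgy := hgr y
          rw [hconst y hy] at hgy
          rcases hgy with h | h
          · simp only [Set.mem_iUnion, Set.mem_prod] at h
            obtain ⟨e, he, hvM, hye⟩ := h
            exact ⟨e, ⟨he, hvM⟩, hye⟩
          · exact absurd h.1 (by simpa using hv0)
        obtain ⟨P, hPc, hPS, hPd, hPU, hPe⟩ := cover_by_countable hS (hRS hr)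
          (hDCc.mono (sep_subset _ _)) (fun e he => hDCS he.1) hcov
        refine ⟨P, hPc, hPS, hPd, hPU, ?_⟩
        intro q hq
        have hqr : q ⊆ r := hPU ▸ subset_sUnion_of_mem hq
        obtain ⟨e, he, hqe⟩ := hPe q hq
        obtain ⟨p, hp, β, hβ, hpβ⟩ := he.2
        exact ⟨hqr, p, β, sect_mono hqe hp, sect_mono hqe hβ, fun y hy => by
          rw [hconst y (hqr hy), hpβ]⟩
  choose P hPc hPS hPd hPU hPq using hatom
  haveI : Countable ↥R := hRc.to_subtype
  set 𝒬 : Set (Set X) := (⋃ r : ↥R, P r) \ {∅} with h𝒬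
  have h𝒬c : 𝒬.Countable := (countable_iUnion hPc).mono diff_subset
  have h𝒬sub : ∀ q ∈ 𝒬, ∃ r : ↥R, q ∈ P r ∧ q ⊆ ↑r := fun q hq => by
    obtain ⟨r, hq'⟩ := Set.mem_iUnion.mp hq.1
    exact ⟨r, hq', (hPq r q hq').1⟩
  have h𝒬S : 𝒬 ⊆ S := fun q hq => by
    obtain ⟨r, hq', _⟩ := h𝒬sub q hq
    exact hPS r hq'
  have h𝒬d : 𝒬.PairwiseDisjoint id := by
    intro q₁ hq₁ q₂ hq₂ hne
    obtain ⟨r₁, hq₁', hsub₁⟩ := h𝒬sub q₁ hq₁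
    obtain ⟨r₂, hq₂', hsub₂⟩ := h𝒬sub q₂ hq₂
    by_cases hrr : (r₁ : Set X) = r₂
    · have hr12 : r₁ = r₂ := Subtype.ext hrr
      subst hr12
      exact hPd r₁ hq₁' hq₂' hne
    · exact Disjoint.mono hsub₁ hsub₂ (hRd r₁.2 r₂.2 hrr)
  have h𝒬U : ⋃₀ 𝒬 = ⋃ j, E j := by
    rw [← hRU]
    apply Set.Subset.antisymm
    · rintro x ⟨q, hq, hx⟩
      obtain ⟨r, _, hsub⟩ := h𝒬sub q hq
      exact ⟨↑r, r.2, hsub hx⟩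
    · rintro x ⟨r, hr, hx⟩
      have hx' : x ∈ ⋃₀ P ⟨r, hr⟩ := (hPU ⟨r, hr⟩).symm ▸ hx
      obtain ⟨q, hq, hxq⟩ := hx'
      have hqne : q ≠ ∅ := fun h => by simp [h] at hxq
      exact ⟨q, ⟨Set.mem_iUnion.mpr ⟨⟨r, hr⟩, hq⟩, hqne⟩, hxq⟩
  have h𝒬di : ∀ q ∈ 𝒬, ∀ j, q ⊆ E j ∨ Disjoint q (E j) := by
    intro q hq j
    obtain ⟨r, _, hsub⟩ := h𝒬sub q hq
    rcases hRdi ↑r r.2 j with h | h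
    · exact Or.inl (hsub.trans h)
    · exact Or.inr (h.mono_left hsub)
  have h𝒬ne : ∀ q ∈ 𝒬, q.Nonempty := fun q hq =>
    Set.nonempty_iff_ne_empty.mpr (by simpa using hq.2)
  have hsplit : ∀ q : ↥𝒬, ∃ p β, p ∈ sect A₁ ↑q ∧ β ∈ sect A₂ ↑q ∧
      ∀ y ∈ (↑q : Set X), stepVal c E y = p + β := by
    rintro ⟨q, hq⟩
    obtain ⟨r, hq', _⟩ := h𝒬sub q hq
    obtain ⟨_, p, β, hp, hβ, hpβ⟩ := hPq r q hq'
    exact ⟨p, β, hp, hβ, hpβ⟩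
  choose pf βf hpf hβf hpβf using hsplit
  -- expansion of the total value over the pieces
  have hEdec : ∀ j, HasSum (fun q : ↥{q ∈ 𝒬 | q ⊆ E j} => μ ↑q) (μ (E j)) := by
    intro j
    refine measure_hasSum hμ (h𝒬c.mono (sep_subset _ _)) (fun q hq => h𝒬S hq.1)
      (h𝒬d.subset (sep_subset _ _)) (hES j) ?_
    apply Set.Subset.antisymm
    · rintro x ⟨q, hq, hx⟩
      exact hq.2 hx
    · intro x hx
      have hx' : x ∈ ⋃₀ 𝒬 := h𝒬U ▸ Set.mem_iUnion.mpr ⟨j, hx⟩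
      obtain ⟨q, hq, hxq⟩ := hx'
      have hqE : q ⊆ E j := by
        rcases h𝒬di q hq j with h | h
        · exact h
        · exact absurd hx (Set.disjoint_left.mp h hxq |> fun h' => h')
      exact ⟨q, ⟨hq, hqE⟩, hxq⟩
  have hjsum : ∀ j, HasSum (fun q : ↥𝒬 => if (q : Set X) ⊆ E j then L (c j) (μ ↑q) else 0)
      (L (c j) (μ (E j))) := by
    intro j
    have hhom := (hEdec j).map (AddMonoidHom.mk' (fun w => L (c j) w) (hL2 (c j))) (hLc (c j))
    exact hasSum_extend (fun q => q ⊆ E j) (fun q => L (c j) (μ q)) hhom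
  have htot : HasSum (fun q : ↥𝒬 => ∑ j, if (q : Set X) ⊆ E j then L (c j) (μ ↑q) else 0)
      (∑ j, L (c j) (μ (E j))) := hasSum_sum (fun j _ => hjsum j)
  have hfun : (fun q : ↥𝒬 => ∑ j, if (q : Set X) ⊆ E j then L (c j) (μ ↑q) else 0)
      = fun q : ↥𝒬 => L (pf q) (μ ↑q) + L (βf q) (μ ↑q) := by
    funext q
    have h1 : (∑ j, if (q : Set X) ⊆ E j then L (c j) (μ ↑q) else 0)
        = L (∑ j, if (q : Set X) ⊆ E j then c j else 0) (μ ↑q) := by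
      rw [L_sum_left hL1]
      refine Finset.sum_congr rfl fun j _ => ?_
      by_cases hc : (q : Set X) ⊆ E j
      · simp [hc]
      · simp [hc, L_zero_left hL1]
    obtain ⟨y, hy⟩ := h𝒬ne ↑q q.2
    have h2 : (∑ j, if (q : Set X) ⊆ E j then c j else 0) = pf q + βf q := by
      rw [← stepVal_const_on c E (h𝒬di ↑q q.2) hy]
      exact hpβf q y hy
    rw [h1, h2, hL1]
  rw [hfun] at htot
  refine mem_closure_of_tendsto htot (Filter.Eventually.of_forall ?_)
  intro G
  rw [Finset.sum_add_distrib]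
  exact ⟨∑ q ∈ G, L (pf q) (μ ↑q), finset_step_mem h01 h𝒬S h𝒬d G pf hpf,
    ∑ q ∈ G, L (βf q) (μ ↑q), finset_step_mem h02 h𝒬S h𝒬d G βf hβf, rfl⟩

end Core

noncomputable section Main

open Set Filter Topology

section Helpers

variable {X V W Z : Type*}

lemma preIntegral_eq_closure [AddCommMonoid V] [AddCommMonoid Z] [TopologicalSpace Z]
    (S : Set (Set X)) (L : V → W → Z) (μ : Set X → W) (A : Set (V × X)) :
    preIntegral S L μ A = closure (preSet S L μ A) := rfl

lemma append_memS {α : Type*} {S : Set α} {m n : ℕ} {E : Fin m → α} {F : Fin n → α}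
    (hE : ∀ j, E j ∈ S) (hF : ∀ j, F j ∈ S) : ∀ k, Fin.append E F k ∈ S := by
  refine Fin.addCases (fun i => ?_) (fun i => ?_)
  · rw [Fin.append_left]; exact hE i
  · rw [Fin.append_right]; exact hF i

lemma sum_append_eval {M : Type*} [AddCommMonoid M] {m n : ℕ} (u : Fin m → V) (v : Fin n → V)
    (P : Fin m → Set X) (Q : Fin n → Set X) (φ : V → Set X → M) :
    ∑ k, φ (Fin.append u v k) (Fin.append P Q k)
      = (∑ k, φ (u k) (P k)) + ∑ k, φ (v k) (Q k) := by
  rw [Fin.sum_univ_add]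
  congr 1
  · exact Finset.sum_congr rfl fun k _ => by rw [Fin.append_left, Fin.append_left]
  · exact Finset.sum_congr rfl fun k _ => by rw [Fin.append_right, Fin.append_right]

end Helpers

end Main

open Set Filter Topology

/-- If `f, g : X → V` are Lebesgue–McShane integrable (with integrals `a`, `b`),
then `f + g` and `-f` are Lebesgue–McShane integrable with
`∫L(f + g, μ) = ∫L(f, μ) + ∫L(g, μ)` and `∫L(-f, μ) = -∫L(f, μ)`. -/
theorem statement11 {X V W Z : Type*}
    [AddCommGroup V] [UniformSpace V] [IsUniformAddGroup V] [CompleteSpace V] [T2Space V]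
    [AddCommGroup W] [UniformSpace W] [IsUniformAddGroup W] [CompleteSpace W] [T2Space W]
    [AddCommGroup Z] [UniformSpace Z] [IsUniformAddGroup Z] [CompleteSpace Z] [T2Space Z]
    (S : Set (Set X)) (hS : IsIntervalSystem S)
    (L : V → W → Z)
    (hL1 : ∀ v₁ v₂ w, L (v₁ + v₂) w = L v₁ w + L v₂ w)
    (hL2 : ∀ v w₁ w₂, L v (w₁ + w₂) = L v w₁ + L v w₂)
    (hLc : ∀ v, Continuous fun w => L v w)
    (μ : Set X → W) (hμ : IsAddMeasure S μ)
    (f g : X → V) (a b : Z)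
    (hf : HasLMIntegral S L μ f a) (hg : HasLMIntegral S L μ g b) :
    HasLMIntegral S L μ (fun x => f x + g x) (a + b) ∧
    HasLMIntegral S L μ (fun x => -f x) (-a) := by
  constructor
  · -- addition
    intro T hT
    obtain ⟨V₁, hV₁, hV₁T⟩ := exists_nhds_zero_half hT
    obtain ⟨V₂, hV₂, hV₂h⟩ := exists_nhds_zero_half hV₁
    obtain ⟨V₃, hV₃, hV₃h⟩ := exists_nhds_zero_half hV₂
    have h0V₁ : (0 : Z) ∈ V₁ := mem_of_mem_nhds hV₁
    have h0V₂ : (0 : Z) ∈ V₂ := mem_of_mem_nhds hV₂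
    have h0V₃ : (0 : Z) ∈ V₃ := mem_of_mem_nhds hV₃
    have hV₁sub : V₁ ⊆ T := fun v hv => by simpa using hV₁T v hv 0 h0V₁
    have hV₃sub : V₃ ⊆ V₂ := fun v hv => by simpa using hV₃h v hv 0 h0V₃
    obtain ⟨A, hAenv, hAgr, hAint⟩ := hf V₃ hV₃
    obtain ⟨B, hBenv, hBgr, hBint⟩ := hg V₃ hV₃
    obtain ⟨mA, cA, FA, D₁, hFAS, hFAgr, hD₁c, hD₁S, hσA0, hA'eq⟩ := center hS hAenv
    obtain ⟨mB, cB, FB, D₂, hFBS, hFBgr, hD₂c, hD₂S, hσB0, hB'eq⟩ := center hS hBenv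
    set A₁ : Set (V × X) := {p : V × X | (p.1 + stepVal cA FA p.2, p.2) ∈ A} with hA₁
    set A₂ : Set (V × X) := {p : V × X | (p.1 + stepVal cB FB p.2, p.2) ∈ B} with hA₂
    have h01 : ∀ x, ((0 : V), x) ∈ A₁ := fun x => sect_cent_zero hFAgr x
    have h02 : ∀ x, ((0 : V), x) ∈ A₂ := fun x => sect_cent_zero hFBgr x
    -- the generating family for the sum envelope
    haveI : Countable ↥D₁ := hD₁c.to_subtype
    haveI : Countable ↥D₂ := hD₂c.to_subtype
    have hdec : ∀ (p : ↥D₁) (q : ↥D₂), ∃ Dq : Set (Set X), Dq.Countable ∧ Dq ⊆ S ∧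
        ⋃₀ Dq = ↑p ∩ ↑q := by
      intro p q
      obtain ⟨Dq, hDqS, hDqc, _, hDqU⟩ := (hS ↑p (hD₁S p.2) ↑q (hD₂S q.2)).2
      exact ⟨Dq, hDqc, hDqS, hDqU⟩
    choose dec hdecc hdecS hdecU using hdec
    set DC : Set (Set X) := (D₁ ∪ D₂) ∪ ⋃ (p : ↥D₁) (q : ↥D₂), dec p q with hDC
    have hDCc : DC.Countable :=
      (hD₁c.union hD₂c).union (countable_iUnion fun p => countable_iUnion fun q => hdecc p q)
    have hDCS : DC ⊆ S := by
      intro e he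
      rcases he with he | he
      · rcases he with he | he
        · exact hD₁S he
        · exact hD₂S he
      · simp only [Set.mem_iUnion] at he
        obtain ⟨p, q, he⟩ := he
        exact hdecS p q he
    have hD₁DC : D₁ ⊆ DC := fun e he => Or.inl (Or.inl he)
    have hD₂DC : D₂ ⊆ DC := fun e he => Or.inl (Or.inr he)
    have hDCU : ⋃₀ DC = ⋃₀ D₁ ∪ ⋃₀ D₂ := by
      apply Set.Subset.antisymm
      · rintro x ⟨e, he, hx⟩
        rcases he with he | he
        · rcases he with he | he
          · exact Or.inl ⟨e, he, hx⟩
          · exact Or.inr ⟨e, he, hx⟩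
        · simp only [Set.mem_iUnion] at he
          obtain ⟨p, q, he⟩ := he
          have := (hdecU p q ▸ subset_sUnion_of_mem he) hx
          exact Or.inl ⟨↑p, p.2, this.1⟩
      · rintro x (⟨e, he, hx⟩ | ⟨e, he, hx⟩)
        · exact ⟨e, hD₁DC he, hx⟩
        · exact ⟨e, hD₂DC he, hx⟩
    set Cset : Set (V × X) :=
      (⋃ e ∈ DC, (Msect A₁ A₂ e) ×ˢ e) ∪ (({0} : Set V) ×ˢ (⋃₀ DC)ᶜ) with hCset
    have hzeroC : ∀ x, ((0 : V), x) ∈ Cset := by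
      intro x
      by_cases hx : x ∈ ⋃₀ DC
      · obtain ⟨e, he, hxe⟩ := hx
        refine Set.mem_union_left _ (Set.mem_iUnion.mpr ⟨e, Set.mem_iUnion.mpr ⟨he, ?_⟩⟩)
        exact ⟨⟨0, fun y _ => h01 y, 0, fun y _ => h02 y, (add_zero 0).symm⟩, hxe⟩
      · exact Set.mem_union_right _ ⟨rfl, hx⟩
    have hτ : ∀ x, stepVal (Fin.append cA cB) (Fin.append FA FB) x
        = stepVal cA FA x + stepVal cB FB x := stepVal_append cA cB FA FB
    set C : Set (V × X) :=
      {p : V × X | (p.1 - stepVal (Fin.append cA cB) (Fin.append FA FB) p.2, p.2) ∈ Cset}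
      with hC
    have hτ0 : ∀ x, x ∉ ⋃₀ DC → stepVal (Fin.append cA cB) (Fin.append FA FB) x = 0 := by
      intro x hx
      rw [hDCU] at hx
      have hx1 : x ∉ ⋃₀ D₁ := fun h => hx (Or.inl h)
      have hx2 : x ∉ ⋃₀ D₂ := fun h => hx (Or.inr h)
      rw [hτ x, hσA0 x hx1, hσB0 x hx2, add_zero]
    -- the envelope property of C
    have hτpieces : ∀ e : ↥DC, ∃ P : Set (Set X), P.Countable ∧ P ⊆ S ∧ ⋃₀ P = ↑e ∧
        ∀ p ∈ P, p ⊆ ↑e ∧ ∀ j, p ⊆ Fin.append FA FB j ∨ Disjoint p (Fin.append FA FB j) :=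
      fun e => const_refine hS (hDCS e.2) (append_memS hFAS hFBS)
    choose P₃ hP₃c hP₃S hP₃U hP₃p using hτpieces
    haveI : Countable ↥DC := hDCc.to_subtype
    set D₃ : Set (Set X) := ⋃ e : ↥DC, P₃ e with hD₃
    have hD₃c : D₃.Countable := countable_iUnion hP₃c
    have hD₃S : D₃ ⊆ S := by
      intro p hp
      obtain ⟨e, hp⟩ := Set.mem_iUnion.mp hp
      exact hP₃S e hp
    have hD₃U : ⋃₀ D₃ = ⋃₀ DC := by
      apply Set.Subset.antisymm
      · rintro x ⟨p, hp, hx⟩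
        obtain ⟨e, hp⟩ := Set.mem_iUnion.mp hp
        exact ⟨↑e, e.2, (hP₃p e p hp).1 hx⟩
      · rintro x ⟨e, he, hx⟩
        have : x ∈ ⋃₀ P₃ ⟨e, he⟩ := (hP₃U ⟨e, he⟩).symm ▸ hx
        obtain ⟨p, hp, hx⟩ := this
        exact ⟨p, Set.mem_iUnion.mpr ⟨⟨e, he⟩, hp⟩, hx⟩
    have hτconst : ∀ (e : ↥DC), ∀ p ∈ P₃ e, ∀ y ∈ p, ∀ z ∈ p,
        stepVal (Fin.append cA cB) (Fin.append FA FB) y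
          = stepVal (Fin.append cA cB) (Fin.append FA FB) z := by
      intro e p hp y hy z hz
      classical
      rw [stepVal_const_on _ _ (hP₃p e p hp).2 hy, stepVal_const_on _ _ (hP₃p e p hp).2 hz]
    have hCenv : IsEnvelope S C := by
      constructor
      · refine ⟨mA + mB, Fin.append cA cB, Fin.append FA FB, append_memS hFAS hFBS, ?_⟩
        intro x
        show (_ - _, x) ∈ Cset
        rw [sub_self]
        exact hzeroC x
      · refine ⟨D₃, hD₃S, hD₃c, ?_⟩
        apply Set.Subset.antisymm
        · rintro ⟨v, x⟩ hvx
          have hvx' : (v - stepVal (Fin.append cA cB) (Fin.append FA FB) x, x) ∈ Cset := hvx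
          rcases hvx' with h | h
          · simp only [Set.mem_iUnion, Set.mem_prod] at h
            obtain ⟨e, he, hvM, hxe⟩ := h
            have : x ∈ ⋃₀ P₃ ⟨e, he⟩ := (hP₃U ⟨e, he⟩).symm ▸ hxe
            obtain ⟨p, hp, hxp⟩ := this
            refine Set.mem_union_left _ (Set.mem_iUnion.mpr ⟨p,
              Set.mem_iUnion.mpr ⟨Set.mem_iUnion.mpr ⟨⟨e, he⟩, hp⟩, ⟨?_, hxp⟩⟩⟩)
            intro y hy
            show (v - _, y) ∈ Cset
            rw [hτconst ⟨e, he⟩ p hp y hy x hxp]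
            exact Set.mem_union_left _ (Set.mem_iUnion.mpr ⟨e,
              Set.mem_iUnion.mpr ⟨he, ⟨hvM, (hP₃p ⟨e, he⟩ p hp).1 hy⟩⟩⟩)
          · have hv : v = 0 := by
              have h1 := h.1
              simp only [Set.mem_singleton_iff, sub_eq_zero] at h1
              rw [h1]
              exact hτ0 x h.2
            refine Set.mem_union_right _ ⟨by simp [hv], ?_⟩
            rw [Set.mem_compl_iff, hD₃U]
            exact h.2
        · rintro ⟨v, x⟩ hvx
          rcases hvx with h | h
          · simp only [Set.mem_iUnion, Set.mem_prod] at h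
            obtain ⟨d, hd, hv, hx⟩ := h
            exact hv x hx
          · have hx : x ∉ ⋃₀ DC := by
              have := h.2
              rwa [Set.mem_compl_iff, hD₃U] at this
            have hv : v = 0 := h.1
            show (v - _, x) ∈ Cset
            rw [hv, hτ0 x hx, sub_zero]
            exact hzeroC x
    -- the graph of f + g is contained in C
    have hCgr : ∀ x, (f x + g x, x) ∈ C := by
      intro x
      show (f x + g x - _, x) ∈ Cset
      have hsplit : f x + g x - stepVal (Fin.append cA cB) (Fin.append FA FB) x
          = (f x - stepVal cA FA x) + (g x - stepVal cB FB x) := by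
        rw [hτ x]; abel
      rw [hsplit]
      have h1 : (f x - stepVal cA FA x, x) ∈ A₁ := by
        show (f x - stepVal cA FA x + stepVal cA FA x, x) ∈ A
        rw [sub_add_cancel]
        exact hAgr x
      have h2 : (g x - stepVal cB FB x, x) ∈ A₂ := by
        show (g x - stepVal cB FB x + stepVal cB FB x, x) ∈ B
        rw [sub_add_cancel]
        exact hBgr x
      rw [hA'eq] at h1
      rw [hB'eq] at h2
      rcases h1 with h1 | h1 <;> rcases h2 with h2 | h2
      · -- both carried by generating sets
        simp only [Set.mem_iUnion, Set.mem_prod] at h1 h2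
        obtain ⟨e₁, he₁, hs₁, hx₁⟩ := h1
        obtain ⟨e₂, he₂, hs₂, hx₂⟩ := h2
        have hxi : x ∈ ⋃₀ dec ⟨e₁, he₁⟩ ⟨e₂, he₂⟩ := by
          rw [hdecU]
          exact ⟨hx₁, hx₂⟩
        obtain ⟨e, he, hxe⟩ := hxi
        have heDC : e ∈ DC := Or.inr (Set.mem_iUnion.mpr ⟨⟨e₁, he₁⟩,
          Set.mem_iUnion.mpr ⟨⟨e₂, he₂⟩, he⟩⟩)
        have hU' := hdecU ⟨e₁, he₁⟩ ⟨e₂, he₂⟩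
        have hesub : e ⊆ e₁ ∩ e₂ := hU' ▸ subset_sUnion_of_mem he
        refine Set.mem_union_left _ (Set.mem_iUnion.mpr ⟨e, Set.mem_iUnion.mpr ⟨heDC, ?_⟩⟩)
        exact ⟨⟨f x - stepVal cA FA x, sect_mono (hesub.trans inter_subset_left) hs₁,
          g x - stepVal cB FB x, sect_mono (hesub.trans inter_subset_right) hs₂, rfl⟩, hxe⟩
      · -- first generated, second zero
        simp only [Set.mem_iUnion, Set.mem_prod] at h1
        obtain ⟨e₁, he₁, hs₁, hx₁⟩ := h1
        have h20 : g x - stepVal cB FB x = 0 := h2.1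
        refine Set.mem_union_left _ (Set.mem_iUnion.mpr ⟨e₁,
          Set.mem_iUnion.mpr ⟨hD₁DC he₁, ?_⟩⟩)
        refine ⟨⟨f x - stepVal cA FA x, hs₁, g x - stepVal cB FB x, ?_, rfl⟩, hx₁⟩
        rw [h20]
        exact fun y _ => h02 y
      · -- first zero, second generated
        simp only [Set.mem_iUnion, Set.mem_prod] at h2
        obtain ⟨e₂, he₂, hs₂, hx₂⟩ := h2
        have h10 : f x - stepVal cA FA x = 0 := h1.1
        refine Set.mem_union_left _ (Set.mem_iUnion.mpr ⟨e₂,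
          Set.mem_iUnion.mpr ⟨hD₂DC he₂, ?_⟩⟩)
        refine ⟨⟨f x - stepVal cA FA x, ?_, g x - stepVal cB FB x, hs₂, rfl⟩, hx₂⟩
        rw [h10]
        exact fun y _ => h01 y
      · -- both zero
        have h10 : f x - stepVal cA FA x = 0 := h1.1
        have h20 : g x - stepVal cB FB x = 0 := h2.1
        refine Set.mem_union_right _ ⟨by simp [h10, h20], ?_⟩
        rw [Set.mem_compl_iff, hDCU]
        rintro (hx | hx)
        · exact h1.2 hx
        · exact h2.2 hx
    -- values
    set vA : Z := ∑ k, L (cA k) (μ (FA k)) with hvA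
    set vB : Z := ∑ k, L (cB k) (μ (FB k)) with hvB
    -- pre-set bounds for the centered envelopes
    have hpre1 : ∀ z₁ ∈ preSet S L μ A₁, ∃ t ∈ V₃, z₁ = (a - vA) + t := by
      rintro z₁ ⟨m', c', E', hE'S, hE'gr, rfl⟩
      have hmem : (∑ k, L (c' k) (μ (E' k))) + vA ∈ preIntegral S L μ A := by
        rw [preIntegral_eq_closure]
        refine subset_closure ⟨m' + mA, Fin.append c' cA, Fin.append E' FA,
          append_memS hE'S hFAS, ?_, ?_⟩
        · intro x
          rw [stepVal_append]
          exact hE'gr x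
        · exact (sum_append_eval c' cA E' FA (fun v e => L v (μ e))).symm
      obtain ⟨t, ht, hteq⟩ := hAint hmem
      refine ⟨t, ht, ?_⟩
      have := eq_sub_of_add_eq hteq
      rw [this]; abel
    have hpre2 : ∀ z₂ ∈ preSet S L μ A₂, ∃ t ∈ V₃, z₂ = (b - vB) + t := by
      rintro z₂ ⟨m', c', E', hE'S, hE'gr, rfl⟩
      have hmem : (∑ k, L (c' k) (μ (E' k))) + vB ∈ preIntegral S L μ B := by
        rw [preIntegral_eq_closure]
        refine subset_closure ⟨m' + mB, Fin.append c' cB, Fin.append E' FB,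
          append_memS hE'S hFBS, ?_, ?_⟩
        · intro x
          rw [stepVal_append]
          exact hE'gr x
        · exact (sum_append_eval c' cB E' FB (fun v e => L v (μ e))).symm
      obtain ⟨t, ht, hteq⟩ := hBint hmem
      refine ⟨t, ht, ?_⟩
      have := eq_sub_of_add_eq hteq
      rw [this]; abel
    set SS : Set Z := {w : Z | ∃ t₁ ∈ V₃, ∃ t₂ ∈ V₃,
      w = ((a - vA) + (b - vB)) + (t₁ + t₂)} with hSS
    have hkey : ∀ z ∈ preSet S L μ C, z - (vA + vB) ∈ closure SS := by
      rintro z ⟨m', c', E', hE'S, hE'gr, rfl⟩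
      -- build the centered representation
      set c'' : Fin (m' + mA + mB) → V :=
        Fin.append (Fin.append c' (fun k => -(cA k))) (fun k => -(cB k)) with hc''
      set E'' : Fin (m' + mA + mB) → Set X := Fin.append (Fin.append E' FA) FB with hE''
      have hE''S : ∀ k, E'' k ∈ S := append_memS (append_memS hE'S hFAS) hFBS
      have hval'' : ∀ x, stepVal c'' E'' x
          = stepVal c' E' x - stepVal (Fin.append cA cB) (Fin.append FA FB) x := by
        intro x
        rw [hc'', hE'', stepVal_append, stepVal_append, stepVal_neg, stepVal_neg, hτ x]
        abel
      have hgr'' : ∀ x, (stepVal c'' E'' x, x) ∈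
          (⋃ e ∈ DC, (Msect A₁ A₂ e) ×ˢ e) ∪ (({0} : Set V) ×ˢ (⋃₀ DC)ᶜ) := by
        intro x
        rw [hval'' x]
        exact hE'gr x
      have hcore := core hS hL1 hL2 hLc hμ A₁ A₂ h01 h02 DC hDCc hDCS hE''S hgr''
      have hsum'' : (∑ k, L (c'' k) (μ (E'' k)))
          = (∑ k, L (c' k) (μ (E' k))) - (vA + vB) := by
        rw [hc'', hE'', sum_append_eval _ _ _ _ (fun v e => L v (μ e)),
          sum_append_eval _ _ _ _ (fun v e => L v (μ e))]
        have hnA : (∑ k, L (-(cA k)) (μ (FA k))) = -vA := by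
          rw [hvA, ← Finset.sum_neg_distrib]
          exact Finset.sum_congr rfl fun k _ => L_neg_left hL1 _ _
        have hnB : (∑ k, L (-(cB k)) (μ (FB k))) = -vB := by
          rw [hvB, ← Finset.sum_neg_distrib]
          exact Finset.sum_congr rfl fun k _ => L_neg_left hL1 _ _
        rw [hnA, hnB]
        abel
      rw [hsum''] at hcore
      refine (closure_mono ?_) hcore
      rintro w ⟨z₁, hz₁, z₂, hz₂, rfl⟩
      obtain ⟨t₁, ht₁, rfl⟩ := hpre1 z₁ hz₁
      obtain ⟨t₂, ht₂, rfl⟩ := hpre2 z₂ hz₂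
      exact ⟨t₁, ht₁, t₂, ht₂, by abel⟩
    -- conclude
    refine ⟨C, hCenv, hCgr, ?_⟩
    have hKclosed : IsClosed {ζ : Z | ζ - (vA + vB) ∈ closure SS} :=
      IsClosed.preimage (continuous_id.sub continuous_const) isClosed_closure
    have hsub : preIntegral S L μ C ⊆ {ζ : Z | ζ - (vA + vB) ∈ closure SS} := by
      rw [preIntegral_eq_closure]
      exact closure_minimal hkey hKclosed
    intro ζ hζ
    have hζ' : ζ - (vA + vB) ∈ closure SS := hsub hζ
    obtain ⟨w, hwSS, herr⟩ := approx_of_mem_closure hζ' hV₃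
    obtain ⟨t₁, ht₁, t₂, ht₂, rfl⟩ := hwSS
    refine ⟨(t₁ + t₂) + (ζ - (vA + vB) - (((a - vA) + (b - vB)) + (t₁ + t₂))), ?_, ?_⟩
    · exact hV₁sub (hV₂h _ (hV₃h t₁ ht₁ t₂ ht₂) _ (hV₃sub herr))
    · abel
  · -- negation
    intro T hT
    obtain ⟨V₁, hV₁, hV₁T⟩ := exists_nhds_zero_half hT
    have hnegV : (fun z : Z => -z) ⁻¹' V₁ ∈ nhds (0 : Z) := by
      have hc : ContinuousAt (fun z : Z => -z) 0 := continuous_neg.continuousAt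
      apply hc
      simpa using hV₁
    obtain ⟨A, hAenv, hAgr, hAint⟩ := hf _ hnegV
    set Aneg : Set (V × X) := {p : V × X | (-p.1, p.2) ∈ A} with hAneg
    obtain ⟨⟨m, cw, F, hFS, hFgr⟩, ⟨D, hDS, hDc, hDeq⟩⟩ := hAenv
    have hnegstep : ∀ (k : ℕ) (c : Fin k → V) (E : Fin k → Set X),
        (∀ x, (stepVal c E x, x) ∈ Aneg) → ∀ x, (stepVal (fun j => -(c j)) E x, x) ∈ A := by
      intro k c E hgr x
      have h := hgr x
      rw [stepVal_neg]
      exact h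
    refine ⟨Aneg, ⟨⟨m, fun k => -(cw k), F, hFS, ?_⟩, ⟨D, hDS, hDc, ?_⟩⟩, ?_, ?_⟩
    · intro x
      show (-(stepVal (fun k => -(cw k)) F x), x) ∈ A
      rw [stepVal_neg, neg_neg]
      exact hFgr x
    · -- envelope equality for Aneg
      apply Set.Subset.antisymm
      · rintro ⟨v, x⟩ hvx
        have hvx' : (-v, x) ∈ A := hvx
        rw [hDeq] at hvx'
        rcases hvx' with h | h
        · simp only [Set.mem_iUnion, Set.mem_prod, Set.mem_setOf_eq] at h
          obtain ⟨d, hd, hv, hx⟩ := h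
          refine Set.mem_union_left _ (Set.mem_iUnion.mpr ⟨d, Set.mem_iUnion.mpr ⟨hd,
            ⟨fun y hy => ?_, hx⟩⟩⟩)
          exact hv y hy
        · have h1 : v = 0 := by
            have := h.1
            simpa [neg_eq_zero] using this
          exact Set.mem_union_right _ ⟨by simp [h1], h.2⟩
      · rintro ⟨v, x⟩ hvx
        rcases hvx with h | h
        · simp only [Set.mem_iUnion, Set.mem_prod, Set.mem_setOf_eq] at h
          obtain ⟨d, hd, hv, hx⟩ := h
          exact hv x hx
        · have h1 : v = 0 := h.1
          show (-v, x) ∈ A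
          rw [hDeq]
          exact Set.mem_union_right _ ⟨by simp [h1], h.2⟩
    · intro x
      show (-(-(f x)), x) ∈ A
      rw [neg_neg]
      exact hAgr x
    · -- pre-integral bound
      have hpre : preSet S L μ Aneg ⊆ {z : Z | ∃ t ∈ V₁, z = -a + t} := by
        rintro z ⟨k, c, E, hES, hgr, rfl⟩
        have hmem : -(∑ j, L (c j) (μ (E j))) ∈ preIntegral S L μ A := by
          rw [preIntegral_eq_closure]
          refine subset_closure ⟨k, fun j => -(c j), E, hES, hnegstep k c E hgr, ?_⟩
          rw [← Finset.sum_neg_distrib]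
          exact Finset.sum_congr rfl fun j _ => (L_neg_left hL1 _ _).symm
        obtain ⟨t, ht, hteq⟩ := hAint hmem
        refine ⟨-t, ht, ?_⟩
        have : (∑ j, L (c j) (μ (E j))) = -(a + t) := by
          rw [← hteq, neg_neg]
        rw [this]; abel
      intro ζ hζ
      rw [preIntegral_eq_closure] at hζ
      have hζ' : ζ ∈ closure {z : Z | ∃ t ∈ V₁, z = -a + t} :=
        closure_mono hpre hζ
      obtain ⟨w, hw, herr⟩ := approx_of_mem_closure hζ' hV₁
      obtain ⟨t, ht, rfl⟩ := hw
      refine ⟨t + (ζ - (-a + t)), hV₁T t ht _ herr, by abel⟩
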